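/- Let H be a bialgebra and D an H-bicomodule coalgebra, i.e., D is a coalgebra with a left coaction λ(d) = d⁽⁻¹⁾ ⊗ d⁽⁰⁾ and right coaction ρ(d) = d⁽⁰⁾' ⊗ d⁽¹⁾' making D a bicomodule, such that both coactions are coalgebra maps in the comodule sense: d₁⁽⁻¹⁾d₂⁽⁻¹⁾ ⊗ d₁⁽⁰⁾ ⊗ d₂⁽⁰⁾ = d⁽⁻¹⁾ ⊗ (d⁽⁰⁾)₁ ⊗ (d⁽⁰⁾)₂, d⁽⁻¹⁾ε_D(d⁽⁰⁾) = ε_D(d)1_H, and the analogous conditions on the right. Then D ⊗ H with comultiplication Δ(d ⊗ h) = (d₁^{<0>} ⊗ d₂^{(-1)}h₁) ⊗ (d₂^{(0)} ⊗ h₂d₁^{<1>}) and counit ε(d ⊗ h) = ε_D(d)ε_H(h) is a coassociative counital coalgebra (the L-R-smash coproduct). -/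

import Mathlib

open TensorProduct
noncomputable section
namespace LRPaper
variable (k : Type*) [CommRing k]

def tt (A B C E : Type*) [AddCommGroup A] [Module k A] [AddCommGroup B] [Module k B]
    [AddCommGroup C] [Module k C] [AddCommGroup E] [Module k E] :
    (A ⊗[k] B) ⊗[k] (C ⊗[k] E) →ₗ[k] (A ⊗[k] C) ⊗[k] (B ⊗[k] E) :=
  (TensorProduct.tensorTensorTensorComm k A B C E).toLinearMap

def asl (A B C : Type*) [AddCommGroup A] [Module k A] [AddCommGroup B] [Module k B]
    [AddCommGroup C] [Module k C] :
    (A ⊗[k] B) ⊗[k] C →ₗ[k] A ⊗[k] (B ⊗[k] C) :=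
  (TensorProduct.assoc k A B C).toLinearMap

def asr (A B C : Type*) [AddCommGroup A] [Module k A] [AddCommGroup B] [Module k B]
    [AddCommGroup C] [Module k C] :
    A ⊗[k] (B ⊗[k] C) →ₗ[k] (A ⊗[k] B) ⊗[k] C :=
  (TensorProduct.assoc k A B C).symm.toLinearMap

def sw (A B : Type*) [AddCommGroup A] [Module k A] [AddCommGroup B] [Module k B] :
    A ⊗[k] B →ₗ[k] B ⊗[k] A :=
  (TensorProduct.comm k A B).toLinearMap


/-- `middle f` applies `f` to the two middle tensor factors. -/
def middle {A B C E B' C' : Type*} [AddCommGroup A] [Module k A] [AddCommGroup B] [Module k B]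
    [AddCommGroup C] [Module k C] [AddCommGroup E] [Module k E]
    [AddCommGroup B'] [Module k B'] [AddCommGroup C'] [Module k C']
    (f : B ⊗[k] C →ₗ[k] B' ⊗[k] C') :
    (A ⊗[k] B) ⊗[k] (C ⊗[k] E) →ₗ[k] (A ⊗[k] B') ⊗[k] (C' ⊗[k] E) :=
  asl k (A ⊗[k] B') C' E
    ∘ₗ TensorProduct.map
        (asr k A B' C' ∘ₗ TensorProduct.map LinearMap.id f ∘ₗ asl k A B C) LinearMap.id
    ∘ₗ asr k (A ⊗[k] B) C E

section Conditions
variable (H : Type*) [Ring H] [Bialgebra k H]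
variable {M N : Type*} [AddCommGroup M] [Module k M] [AddCommGroup N] [Module k N]

/-- counit of `H` -/
def εH : H →ₗ[k] k := Coalgebra.counit
/-- comultiplication of `H` -/
def δH : H →ₗ[k] H ⊗[k] H := Coalgebra.comul
/-- multiplication of `H` -/
def μH : H ⊗[k] H →ₗ[k] H := LinearMap.mul' k H

def IsLeftModule (aL : H ⊗[k] M →ₗ[k] M) : Prop :=
  (∀ m : M, aL (1 ⊗ₜ m) = m) ∧
  ∀ (h h' : H) (m : M), aL ((h * h') ⊗ₜ m) = aL (h ⊗ₜ aL (h' ⊗ₜ m))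

def IsRightModule (aR : M ⊗[k] H →ₗ[k] M) : Prop :=
  (∀ m : M, aR (m ⊗ₜ 1) = m) ∧
  ∀ (m : M) (h h' : H), aR (m ⊗ₜ (h * h')) = aR (aR (m ⊗ₜ h) ⊗ₜ h')

def IsBimodule (aL : H ⊗[k] M →ₗ[k] M) (aR : M ⊗[k] H →ₗ[k] M) : Prop :=
  IsLeftModule k H aL ∧ IsRightModule k H aR ∧
  ∀ (h : H) (m : M) (h' : H), aR (aL (h ⊗ₜ m) ⊗ₜ h') = aL (h ⊗ₜ aR (m ⊗ₜ h'))

def IsLeftComodule (cL : M →ₗ[k] H ⊗[k] M) : Prop :=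
  (∀ m : M, TensorProduct.lid k M (TensorProduct.map (εH k H) LinearMap.id (cL m)) = m) ∧
  ∀ m : M, TensorProduct.map LinearMap.id cL (cL m)
    = TensorProduct.assoc k H H M (TensorProduct.map (δH k H) LinearMap.id (cL m))

def IsRightComodule (cR : M →ₗ[k] M ⊗[k] H) : Prop :=
  (∀ m : M, TensorProduct.rid k M (TensorProduct.map LinearMap.id (εH k H) (cR m)) = m) ∧
  ∀ m : M, TensorProduct.map cR LinearMap.id (cR m)
    = (TensorProduct.assoc k M H H).symm (TensorProduct.map LinearMap.id (δH k H) (cR m))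

def IsBicomodule (cL : M →ₗ[k] H ⊗[k] M) (cR : M →ₗ[k] M ⊗[k] H) : Prop :=
  IsLeftComodule k H cL ∧ IsRightComodule k H cR ∧
  ∀ m : M, TensorProduct.map LinearMap.id cR (cL m)
    = TensorProduct.assoc k H M H (TensorProduct.map cL LinearMap.id (cR m))

/-- `(h₁⊗h₂)⊗m ↦ (h₁·m)⁽⁻¹⁾h₂ ⊗ (h₁·m)⁽⁰⁾` -/
def ydlL (aL : H ⊗[k] M →ₗ[k] M) (cL : M →ₗ[k] H ⊗[k] M) :
    (H ⊗[k] H) ⊗[k] M →ₗ[k] H ⊗[k] M :=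
  TensorProduct.map (μH k H ∘ₗ sw k H H) LinearMap.id
    ∘ₗ asr k H H M
    ∘ₗ TensorProduct.map LinearMap.id (cL ∘ₗ aL)
    ∘ₗ asl k H H M
    ∘ₗ TensorProduct.map (sw k H H) LinearMap.id

/-- `(h₁⊗h₂)⊗m ↦ h₁m⁽⁻¹⁾ ⊗ h₂·m⁽⁰⁾` -/
def ydlR (aL : H ⊗[k] M →ₗ[k] M) (cL : M →ₗ[k] H ⊗[k] M) :
    (H ⊗[k] H) ⊗[k] M →ₗ[k] H ⊗[k] M :=
  TensorProduct.map (μH k H) aL ∘ₗ tt k H H H M ∘ₗ TensorProduct.map LinearMap.id cL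

/-- left-left Yetter–Drinfeld compatibility -/
def CondYDl (aL : H ⊗[k] M →ₗ[k] M) (cL : M →ₗ[k] H ⊗[k] M) : Prop :=
  ∀ (h : H) (m : M),
    ydlL k H aL cL (δH k H h ⊗ₜ m) = ydlR k H aL cL (δH k H h ⊗ₜ m)

/-- left-right Long compatibility -/
def CondLongLR (aL : H ⊗[k] M →ₗ[k] M) (cR : M →ₗ[k] M ⊗[k] H) : Prop :=
  ∀ (h : H) (m : M),
    cR (aL (h ⊗ₜ m))
      = TensorProduct.map aL LinearMap.id ((TensorProduct.assoc k H M H).symm (h ⊗ₜ cR m))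

/-- `m⊗(h₁⊗h₂) ↦ (m·h₂)⁽⁰⁾ ⊗ h₁(m·h₂)⁽¹⁾` -/
def ydrL (aR : M ⊗[k] H →ₗ[k] M) (cR : M →ₗ[k] M ⊗[k] H) :
    M ⊗[k] (H ⊗[k] H) →ₗ[k] M ⊗[k] H :=
  TensorProduct.map LinearMap.id (μH k H ∘ₗ sw k H H)
    ∘ₗ asl k M H H
    ∘ₗ TensorProduct.map (cR ∘ₗ aR) LinearMap.id
    ∘ₗ asr k M H H
    ∘ₗ TensorProduct.map LinearMap.id (sw k H H)

/-- `m⊗(h₁⊗h₂) ↦ m⁽⁰⁾·h₁ ⊗ m⁽¹⁾h₂` -/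
def ydrR (aR : M ⊗[k] H →ₗ[k] M) (cR : M →ₗ[k] M ⊗[k] H) :
    M ⊗[k] (H ⊗[k] H) →ₗ[k] M ⊗[k] H :=
  TensorProduct.map aR (μH k H) ∘ₗ tt k M H H H ∘ₗ TensorProduct.map cR LinearMap.id

/-- right-right Yetter–Drinfeld compatibility -/
def CondYDr (aR : M ⊗[k] H →ₗ[k] M) (cR : M →ₗ[k] M ⊗[k] H) : Prop :=
  ∀ (h : H) (m : M),
    ydrL k H aR cR (m ⊗ₜ δH k H h) = ydrR k H aR cR (m ⊗ₜ δH k H h)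

/-- right-left Long compatibility -/
def CondLongRL (aR : M ⊗[k] H →ₗ[k] M) (cL : M →ₗ[k] H ⊗[k] M) : Prop :=
  ∀ (m : M) (h : H),
    cL (aR (m ⊗ₜ h))
      = TensorProduct.map LinearMap.id aR (TensorProduct.assoc k H M H (cL m ⊗ₜ h))

/-- objects of the category LR(H) -/
def IsLRObj (aL : H ⊗[k] M →ₗ[k] M) (aR : M ⊗[k] H →ₗ[k] M)
    (cL : M →ₗ[k] H ⊗[k] M) (cR : M →ₗ[k] M ⊗[k] H) : Prop :=
  IsBimodule k H aL aR ∧ IsBicomodule k H cL cR ∧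
  CondYDl k H aL cL ∧ CondLongLR k H aL cR ∧ CondYDr k H aR cR ∧ CondLongRL k H aR cL


variable {P : Type*} [AddCommGroup P] [Module k P]

/-- diagonal left action on `M ⊗ N` -/
def tActL (aLM : H ⊗[k] M →ₗ[k] M) (aLN : H ⊗[k] N →ₗ[k] N) :
    H ⊗[k] (M ⊗[k] N) →ₗ[k] M ⊗[k] N :=
  TensorProduct.map aLM aLN ∘ₗ tt k H H M N ∘ₗ TensorProduct.map (δH k H) LinearMap.id

/-- diagonal right action on `M ⊗ N` -/
def tActR (aRM : M ⊗[k] H →ₗ[k] M) (aRN : N ⊗[k] H →ₗ[k] N) :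
    (M ⊗[k] N) ⊗[k] H →ₗ[k] M ⊗[k] N :=
  TensorProduct.map aRM aRN ∘ₗ tt k M N H H ∘ₗ TensorProduct.map LinearMap.id (δH k H)

/-- codiagonal left coaction on `M ⊗ N` -/
def tCoactL (cLM : M →ₗ[k] H ⊗[k] M) (cLN : N →ₗ[k] H ⊗[k] N) :
    M ⊗[k] N →ₗ[k] H ⊗[k] (M ⊗[k] N) :=
  TensorProduct.map (μH k H) LinearMap.id ∘ₗ tt k H M H N ∘ₗ TensorProduct.map cLM cLN

/-- codiagonal right coaction on `M ⊗ N` -/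
def tCoactR (cRM : M →ₗ[k] M ⊗[k] H) (cRN : N →ₗ[k] N ⊗[k] H) :
    M ⊗[k] N →ₗ[k] (M ⊗[k] N) ⊗[k] H :=
  TensorProduct.map LinearMap.id (μH k H) ∘ₗ tt k M H N H ∘ₗ TensorProduct.map cRM cRN

/-- the (pre)braiding `m ⊗ n ↦ m⁽⁻¹⁾·n⁽⁰⁾ ⊗ m⁽⁰⁾·n⁽¹⁾` of LR(H) -/
def braid (cLM : M →ₗ[k] H ⊗[k] M) (aRM : M ⊗[k] H →ₗ[k] M)
    (aLN : H ⊗[k] N →ₗ[k] N) (cRN : N →ₗ[k] N ⊗[k] H) :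
    M ⊗[k] N →ₗ[k] N ⊗[k] M :=
  TensorProduct.map aLN aRM ∘ₗ tt k H M N H ∘ₗ TensorProduct.map cLM cRN

/-- coalgebra axioms for explicit comultiplication and counit -/
def IsCoalg (Δd : M →ₗ[k] M ⊗[k] M) (εd : M →ₗ[k] k) : Prop :=
  (∀ m : M, TensorProduct.lid k M (TensorProduct.map εd LinearMap.id (Δd m)) = m) ∧
  (∀ m : M, TensorProduct.rid k M (TensorProduct.map LinearMap.id εd (Δd m)) = m) ∧
  ∀ m : M, TensorProduct.assoc k M M M (TensorProduct.map Δd LinearMap.id (Δd m))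
    = TensorProduct.map LinearMap.id Δd (Δd m)

/-- `M` is a left `H`-comodule coalgebra -/
def IsLComodCoalg (cL : M →ₗ[k] H ⊗[k] M) (Δd : M →ₗ[k] M ⊗[k] M) (εd : M →ₗ[k] k) : Prop :=
  (∀ m : M,
    TensorProduct.map (μH k H) LinearMap.id (tt k H M H M (TensorProduct.map cL cL (Δd m)))
      = TensorProduct.map LinearMap.id Δd (cL m)) ∧
  ∀ m : M, TensorProduct.rid k H (TensorProduct.map LinearMap.id εd (cL m)) = εd m • (1 : H)

/-- `M` is a right `H`-comodule coalgebra -/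
def IsRComodCoalg (cR : M →ₗ[k] M ⊗[k] H) (Δd : M →ₗ[k] M ⊗[k] M) (εd : M →ₗ[k] k) : Prop :=
  (∀ m : M,
    TensorProduct.map LinearMap.id (μH k H) (tt k M H M H (TensorProduct.map cR cR (Δd m)))
      = TensorProduct.map Δd LinearMap.id (cR m)) ∧
  ∀ m : M, TensorProduct.lid k H (TensorProduct.map εd LinearMap.id (cR m)) = εd m • (1 : H)

/-- morphisms of LR(H) -/
def IsLRHom {M' : Type*} [AddCommGroup M'] [Module k M']
    (aLM : H ⊗[k] M →ₗ[k] M) (aRM : M ⊗[k] H →ₗ[k] M)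
    (cLM : M →ₗ[k] H ⊗[k] M) (cRM : M →ₗ[k] M ⊗[k] H)
    (aLM' : H ⊗[k] M' →ₗ[k] M') (aRM' : M' ⊗[k] H →ₗ[k] M')
    (cLM' : M' →ₗ[k] H ⊗[k] M') (cRM' : M' →ₗ[k] M' ⊗[k] H)
    (f : M →ₗ[k] M') : Prop :=
  (∀ (h : H) (m : M), f (aLM (h ⊗ₜ m)) = aLM' (h ⊗ₜ f m)) ∧
  (∀ (m : M) (h : H), f (aRM (m ⊗ₜ h)) = aRM' (f m ⊗ₜ h)) ∧
  (∀ m : M, cLM' (f m) = TensorProduct.map LinearMap.id f (cLM m)) ∧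
  (∀ m : M, cRM' (f m) = TensorProduct.map f LinearMap.id (cRM m))


end Conditions

section AlgebraConditions
variable (H : Type*) [Ring H] [Bialgebra k H]
variable {D : Type*} [Ring D] [Algebra k D]

/-- multiplication of `D` -/
def μD : D ⊗[k] D →ₗ[k] D := LinearMap.mul' k D

/-- `D` is a left `H`-module algebra -/
def IsLeftModuleAlgebra (aL : H ⊗[k] D →ₗ[k] D) : Prop :=
  (∀ h : H, aL (h ⊗ₜ (1 : D)) = εH k H h • (1 : D)) ∧
  ∀ (h : H) (c d : D),
    aL (h ⊗ₜ (c * d))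
      = μD k (TensorProduct.map aL aL (tt k H H D D (δH k H h ⊗ₜ (c ⊗ₜ d))))

/-- `D` is a right `H`-module algebra -/
def IsRightModuleAlgebra (aR : D ⊗[k] H →ₗ[k] D) : Prop :=
  (∀ h : H, aR ((1 : D) ⊗ₜ h) = εH k H h • (1 : D)) ∧
  ∀ (c d : D) (h : H),
    aR ((c * d) ⊗ₜ h)
      = μD k (TensorProduct.map aR aR (tt k D D H H ((c ⊗ₜ d) ⊗ₜ δH k H h)))

/-- `ε_D` is an algebra map -/
def CondCounitAlg (εd : D →ₗ[k] k) : Prop :=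
  εd 1 = 1 ∧ ∀ c d : D, εd (c * d) = εd c * εd d

/-- `ε_D(h·d) = ε(h)ε_D(d)` and `ε_D(d·h) = ε_D(d)ε(h)` -/
def CondCounitActs (aL : H ⊗[k] D →ₗ[k] D) (aR : D ⊗[k] H →ₗ[k] D) (εd : D →ₗ[k] k) : Prop :=
  ∀ (h : H) (d : D), εd (aL (h ⊗ₜ d)) = εH k H h * εd d ∧ εd (aR (d ⊗ₜ h)) = εd d * εH k H h

/-- unitality of the coactions and of the comultiplication of `D` -/
def CondUnits (cL : D →ₗ[k] H ⊗[k] D) (cR : D →ₗ[k] D ⊗[k] H) (Δd : D →ₗ[k] D ⊗[k] D) : Prop :=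
  cL 1 = 1 ⊗ₜ 1 ∧ cR 1 = 1 ⊗ₜ 1 ∧ Δd 1 = 1 ⊗ₜ 1

/-- both coactions of `D` are multiplicative -/
def CondCoactMul (cL : D →ₗ[k] H ⊗[k] D) (cR : D →ₗ[k] D ⊗[k] H) : Prop :=
  (∀ c d : D, cL (c * d)
      = TensorProduct.map (μH k H) (μD k) (tt k H D H D (cL c ⊗ₜ cL d))) ∧
  ∀ c d : D, cR (c * d)
      = TensorProduct.map (μD k) (μH k H) (tt k D H D H (cR c ⊗ₜ cR d))

/-- `Δ_D` is an `H`-bimodule map -/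
def CondComulAct (aL : H ⊗[k] D →ₗ[k] D) (aR : D ⊗[k] H →ₗ[k] D)
    (Δd : D →ₗ[k] D ⊗[k] D) : Prop :=
  (∀ (h : H) (d : D), Δd (aL (h ⊗ₜ d))
      = TensorProduct.map aL aL (tt k H H D D (δH k H h ⊗ₜ Δd d))) ∧
  ∀ (d : D) (h : H), Δd (aR (d ⊗ₜ h))
      = TensorProduct.map aR aR (tt k D D H H (Δd d ⊗ₜ δH k H h))

/-- `Δ_D(cd) = c₁(c₂⁽⁻¹⁾·d₁⁽⁰⁾) ⊗ (c₂⁽⁰⁾·d₁⁽¹⁾)d₂` -/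
def CondBraidMul (aL : H ⊗[k] D →ₗ[k] D) (aR : D ⊗[k] H →ₗ[k] D)
    (cL : D →ₗ[k] H ⊗[k] D) (cR : D →ₗ[k] D ⊗[k] H) (Δd : D →ₗ[k] D ⊗[k] D) : Prop :=
  ∀ c d : D, Δd (c * d)
    = TensorProduct.map (μD k) (μD k)
        (middle k (braid k H cL aR aL cR) (Δd c ⊗ₜ Δd d))

/-- `c⁽⁰⁾·d⁽⁻¹⁾ ⊗ c⁽¹⁾·d⁽⁰⁾ = c ⊗ d` -/
def Cond114 (aL : H ⊗[k] D →ₗ[k] D) (aR : D ⊗[k] H →ₗ[k] D)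
    (cL : D →ₗ[k] H ⊗[k] D) (cR : D →ₗ[k] D ⊗[k] H) : Prop :=
  ∀ c d : D, TensorProduct.map aR aL (tt k D H H D (cR c ⊗ₜ cL d)) = c ⊗ₜ d

/-- `(H, D)` is an L-R-admissible pair -/
def LRAdmissible (aL : H ⊗[k] D →ₗ[k] D) (aR : D ⊗[k] H →ₗ[k] D)
    (cL : D →ₗ[k] H ⊗[k] D) (cR : D →ₗ[k] D ⊗[k] H)
    (Δd : D →ₗ[k] D ⊗[k] D) (εd : D →ₗ[k] k) : Prop :=
  IsBimodule k H aL aR ∧ IsLeftModuleAlgebra k H aL ∧ IsRightModuleAlgebra k H aR ∧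
  IsBicomodule k H cL cR ∧ IsCoalg k Δd εd ∧
  IsLComodCoalg k H cL Δd εd ∧ IsRComodCoalg k H cR Δd εd ∧
  CondCounitAlg k εd ∧ CondCounitActs k H aL aR εd ∧ CondUnits k H cL cR Δd ∧
  CondCoactMul k H cL cR ∧ CondComulAct k H aL aR Δd ∧ CondBraidMul k H aL aR cL cR Δd ∧
  CondYDl k H aL cL ∧ CondLongLR k H aL cR ∧ CondYDr k H aR cR ∧ CondLongRL k H aR cL ∧
  Cond114 k H aL aR cL cR

/-- `Σ (d·h'₂) ⊗ h'₁` -/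
def Xel (aR : D ⊗[k] H →ₗ[k] D) (d : D) (h' : H) : D ⊗[k] H :=
  TensorProduct.map aR LinearMap.id
    ((TensorProduct.assoc k D H H).symm (d ⊗ₜ TensorProduct.comm k H H (δH k H h')))

/-- `Σ (h₁·d') ⊗ h₂` -/
def Yel (aL : H ⊗[k] D →ₗ[k] D) (h : H) (d' : D) : D ⊗[k] H :=
  TensorProduct.comm k H D
    (TensorProduct.map LinearMap.id aL
      (TensorProduct.assoc k H H D
        (TensorProduct.map (sw k H H) LinearMap.id (δH k H h ⊗ₜ d'))))

/-- the element `(d·h'₂)(h₁·d') ⊗ h₂h'₁` of the L-R-smash product -/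
def smashMulExpr (aL : H ⊗[k] D →ₗ[k] D) (aR : D ⊗[k] H →ₗ[k] D)
    (d : D) (h : H) (d' : D) (h' : H) : D ⊗[k] H :=
  TensorProduct.map (μD k) (μH k H ∘ₗ sw k H H)
    (tt k D H D H (Xel k H aR d h' ⊗ₜ Yel k H aL h d'))

end AlgebraConditions

section CoproductGeneric
variable (H : Type*) [Ring H] [Bialgebra k H]
variable {D : Type*} [AddCommGroup D] [Module k D]

/-- structure map of the L-R-smash coproduct:
`(d₁⊗d₂)⊗(h₁⊗h₂) ↦ (d₁⁽⁰⁾ ⊗ d₂⁽⁻¹⁾h₁) ⊗ (d₂⁽⁰⁾ ⊗ h₂d₁⁽¹⁾)` -/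
def Wmap (cL : D →ₗ[k] H ⊗[k] D) (cR : D →ₗ[k] D ⊗[k] H) :
    (D ⊗[k] D) ⊗[k] (H ⊗[k] H) →ₗ[k] (D ⊗[k] H) ⊗[k] (D ⊗[k] H) :=
  TensorProduct.map
      (TensorProduct.map LinearMap.id (μH k H) ∘ₗ asl k D H H)
      (TensorProduct.map LinearMap.id (μH k H ∘ₗ sw k H H) ∘ₗ asl k D H H
        ∘ₗ TensorProduct.map (sw k H D) LinearMap.id)
    ∘ₗ tt k (D ⊗[k] H) (H ⊗[k] D) H H
    ∘ₗ TensorProduct.map (tt k D H H D) LinearMap.id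
    ∘ₗ TensorProduct.map (TensorProduct.map cR cL) LinearMap.id

/-- counit of the L-R-smash coproduct -/
def smashCounit (εd : D →ₗ[k] k) : D ⊗[k] H →ₗ[k] k :=
  LinearMap.mul' k k ∘ₗ TensorProduct.map εd (εH k H)



end CoproductGeneric

/-- the trivial right action `d·h = ε(h)d` -/
def trivActR {D : Type*} [AddCommGroup D] [Module k D] (H : Type*) [Ring H] [Bialgebra k H] :
    D ⊗[k] H →ₗ[k] D :=
  (TensorProduct.rid k D).toLinearMap ∘ₗ TensorProduct.map LinearMap.id (εH k H)

/-- the trivial right coaction `d ↦ d ⊗ 1` -/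
def trivCoactR {D : Type*} [AddCommGroup D] [Module k D] (H : Type*) [Ring H] [Bialgebra k H] :
    D →ₗ[k] D ⊗[k] H :=
  TensorProduct.map LinearMap.id (Algebra.linearMap k H) ∘ₗ (TensorProduct.rid k D).symm.toLinearMap

/-- the trivial left action `h·d = ε(h)d` -/
def trivActL {D : Type*} [AddCommGroup D] [Module k D] (H : Type*) [Ring H] [Bialgebra k H] :
    H ⊗[k] D →ₗ[k] D :=
  (TensorProduct.lid k D).toLinearMap ∘ₗ TensorProduct.map (εH k H) LinearMap.id

/-- the trivial left coaction `d ↦ 1 ⊗ d` -/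
def trivCoactL {D : Type*} [AddCommGroup D] [Module k D] (H : Type*) [Ring H] [Bialgebra k H] :
    D →ₗ[k] H ⊗[k] D :=
  TensorProduct.map (Algebra.linearMap k H) LinearMap.id ∘ₗ (TensorProduct.lid k D).symm.toLinearMap

section DoubleBiproduct
variable (H : Type*) [Ring H] [Bialgebra k H]
variable (A B : Type*) [Ring A] [Algebra k A] [Ring B] [Algebra k B]

/-- braiding of the left-left Yetter-Drinfeld category: `x ⊗ y ↦ x⁽⁻¹⁾·y ⊗ x⁽⁰⁾` -/
def braidYDl (cA : A →ₗ[k] H ⊗[k] A) (aA : H ⊗[k] A →ₗ[k] A) :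
    A ⊗[k] A →ₗ[k] A ⊗[k] A :=
  sw k A A ∘ₗ TensorProduct.map LinearMap.id aA ∘ₗ asl k A H A
    ∘ₗ TensorProduct.map (sw k H A) LinearMap.id ∘ₗ TensorProduct.map cA LinearMap.id

/-- braiding of the right-right Yetter-Drinfeld category: `x ⊗ y ↦ y⁽⁰⁾ ⊗ x·y⁽¹⁾` -/
def braidYDr (cB : B →ₗ[k] B ⊗[k] H) (aB : B ⊗[k] H →ₗ[k] B) :
    B ⊗[k] B →ₗ[k] B ⊗[k] B :=
  TensorProduct.map LinearMap.id aB ∘ₗ asl k B B H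
    ∘ₗ TensorProduct.map (sw k B B) LinearMap.id ∘ₗ asr k B B H
    ∘ₗ TensorProduct.map LinearMap.id cB

/-- `A` is a bialgebra in the left-left Yetter-Drinfeld category over `H` -/
def YDlBialgebra (aA : H ⊗[k] A →ₗ[k] A) (cA : A →ₗ[k] H ⊗[k] A)
    (ΔA : A →ₗ[k] A ⊗[k] A) (εA : A →ₗ[k] k) : Prop :=
  IsLeftModule k H aA ∧ IsLeftComodule k H cA ∧ CondYDl k H aA cA ∧
  IsLeftModuleAlgebra k H aA ∧
  (∀ a a' : A, cA (a * a')
      = TensorProduct.map (μH k H) (μD k) (tt k H A H A (cA a ⊗ₜ cA a'))) ∧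
  cA 1 = 1 ⊗ₜ 1 ∧ IsCoalg k ΔA εA ∧ CondCounitAlg k εA ∧
  (∀ (h : H) (a : A), εA (aA (h ⊗ₜ a)) = εH k H h * εA a) ∧ ΔA 1 = 1 ⊗ₜ 1 ∧
  (∀ (h : H) (a : A), ΔA (aA (h ⊗ₜ a))
      = TensorProduct.map aA aA (tt k H H A A (δH k H h ⊗ₜ ΔA a))) ∧
  IsLComodCoalg k H cA ΔA εA ∧
  ∀ a a' : A, ΔA (a * a')
      = TensorProduct.map (μD k) (μD k)
          (middle k (braidYDl k H A cA aA) (ΔA a ⊗ₜ ΔA a'))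

/-- `B` is a bialgebra in the right-right Yetter-Drinfeld category over `H` -/
def YDrBialgebra (aB : B ⊗[k] H →ₗ[k] B) (cB : B →ₗ[k] B ⊗[k] H)
    (ΔB : B →ₗ[k] B ⊗[k] B) (εB : B →ₗ[k] k) : Prop :=
  IsRightModule k H aB ∧ IsRightComodule k H cB ∧ CondYDr k H aB cB ∧
  IsRightModuleAlgebra k H aB ∧
  (∀ b b' : B, cB (b * b')
      = TensorProduct.map (μD k) (μH k H) (tt k B H B H (cB b ⊗ₜ cB b'))) ∧
  cB 1 = 1 ⊗ₜ 1 ∧ IsCoalg k ΔB εB ∧ CondCounitAlg k εB ∧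
  (∀ (b : B) (h : H), εB (aB (b ⊗ₜ h)) = εB b * εH k H h) ∧ ΔB 1 = 1 ⊗ₜ 1 ∧
  (∀ (b : B) (h : H), ΔB (aB (b ⊗ₜ h))
      = TensorProduct.map aB aB (tt k B B H H (ΔB b ⊗ₜ δH k H h))) ∧
  IsRComodCoalg k H cB ΔB εB ∧
  ∀ b b' : B, ΔB (b * b')
      = TensorProduct.map (μD k) (μD k)
          (middle k (braidYDr k H B cB aB) (ΔB b ⊗ₜ ΔB b'))

/-- the trivial-pairing condition `b² ▷ a² ⊗ b¹ ◁ a¹ = a ⊗ b` -/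
def PairingTrivial (aA : H ⊗[k] A →ₗ[k] A) (cA : A →ₗ[k] H ⊗[k] A)
    (aB : B ⊗[k] H →ₗ[k] B) (cB : B →ₗ[k] B ⊗[k] H) : Prop :=
  ∀ (a : A) (b : B),
    sw k B A (TensorProduct.map aB aA (tt k B H H A (cB b ⊗ₜ cA a))) = a ⊗ₜ b

/-- `Σ a(h₁ ▷ a') ⊗ h₂` -/
def P1 (aA : H ⊗[k] A →ₗ[k] A) (a : A) (h : H) (a' : A) : A ⊗[k] H :=
  TensorProduct.map (μD k) LinearMap.id
    ((TensorProduct.assoc k A A H).symm (a ⊗ₜ Yel k H aA h a'))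

/-- `Σ h'₁ ⊗ (b ◁ h'₂)b'` -/
def P2 (aB : B ⊗[k] H →ₗ[k] B) (b : B) (h' : H) (b' : B) : H ⊗[k] B :=
  TensorProduct.map LinearMap.id (μD k)
    (TensorProduct.assoc k H B B
      ((sw k B H
          (TensorProduct.map aB LinearMap.id
            ((TensorProduct.assoc k B H H).symm
              (TensorProduct.map LinearMap.id (sw k H H) (b ⊗ₜ δH k H h'))))) ⊗ₜ b'))

/-- `(x⊗u)⊗(v⊗y) ↦ (x ⊗ uv) ⊗ y` -/
def combineAHB : (A ⊗[k] H) ⊗[k] (H ⊗[k] B) →ₗ[k] (A ⊗[k] H) ⊗[k] B :=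
  TensorProduct.map (TensorProduct.map LinearMap.id (μH k H)) LinearMap.id
    ∘ₗ TensorProduct.map (asl k A H H) LinearMap.id
    ∘ₗ (TensorProduct.assoc k (A ⊗[k] H) H B).symm.toLinearMap

/-- the element `a(h₁▷a') # h₂h'₁ # (b◁h'₂)b'` of the double biproduct -/
def dblMulExpr (aA : H ⊗[k] A →ₗ[k] A) (aB : B ⊗[k] H →ₗ[k] B)
    (a : A) (h : H) (b : B) (a' : A) (h' : H) (b' : B) : (A ⊗[k] H) ⊗[k] B :=
  combineAHB k H A B (P1 k H A aA a h a' ⊗ₜ P2 k H B aB b h' b')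

/-- comultiplication map of the double biproduct:
`((a₁⊗a₂)⊗(h₁⊗h₂))⊗(b₁⊗b₂) ↦ (a₁ # a₂¹h₁ # b₁¹) ⊗ (a₂² # h₂b₁² # b₂)` -/
def Wd (cA : A →ₗ[k] H ⊗[k] A) (cB : B →ₗ[k] B ⊗[k] H) :
    ((A ⊗[k] A) ⊗[k] (H ⊗[k] H)) ⊗[k] (B ⊗[k] B) →ₗ[k]
      ((A ⊗[k] H) ⊗[k] B) ⊗[k] ((A ⊗[k] H) ⊗[k] B) :=
  TensorProduct.map LinearMap.id
      (TensorProduct.map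
          (TensorProduct.map LinearMap.id (μH k H) ∘ₗ asl k A H H ∘ₗ sw k H (A ⊗[k] H))
          LinearMap.id
        ∘ₗ (TensorProduct.assoc k H (A ⊗[k] H) B).symm.toLinearMap)
    ∘ₗ (TensorProduct.assoc k ((A ⊗[k] H) ⊗[k] B) H ((A ⊗[k] H) ⊗[k] B)).toLinearMap
    ∘ₗ TensorProduct.map (TensorProduct.assoc k (A ⊗[k] H) B H).symm.toLinearMap LinearMap.id
    ∘ₗ tt k (A ⊗[k] H) (A ⊗[k] H) (B ⊗[k] H) B
    ∘ₗ TensorProduct.map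
        (TensorProduct.map (TensorProduct.map LinearMap.id (μH k H) ∘ₗ asl k A H H) LinearMap.id)
        LinearMap.id
    ∘ₗ TensorProduct.map (tt k (A ⊗[k] H) A H H) LinearMap.id
    ∘ₗ TensorProduct.map
        (TensorProduct.map
          ((TensorProduct.assoc k A H A).symm.toLinearMap ∘ₗ TensorProduct.map LinearMap.id cA)
          LinearMap.id)
        (TensorProduct.map cB LinearMap.id)

/-- counit of the double biproduct -/
def dblCounit (εA : A →ₗ[k] k) (εB : B →ₗ[k] k) : (A ⊗[k] H) ⊗[k] B →ₗ[k] k :=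
  LinearMap.mul' k k
    ∘ₗ TensorProduct.map (LinearMap.mul' k k ∘ₗ TensorProduct.map εA (εH k H)) εB

/-- induced left action on `D = A ⊗ B` -/
def dActL (aA : H ⊗[k] A →ₗ[k] A) : H ⊗[k] (A ⊗[k] B) →ₗ[k] A ⊗[k] B :=
  TensorProduct.map aA LinearMap.id ∘ₗ asr k H A B

/-- induced right action on `D = A ⊗ B` -/
def dActR (aB : B ⊗[k] H →ₗ[k] B) : (A ⊗[k] B) ⊗[k] H →ₗ[k] A ⊗[k] B :=
  TensorProduct.map LinearMap.id aB ∘ₗ asl k A B H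

/-- induced left coaction on `D = A ⊗ B` -/
def dCoactL (cA : A →ₗ[k] H ⊗[k] A) : A ⊗[k] B →ₗ[k] H ⊗[k] (A ⊗[k] B) :=
  asl k H A B ∘ₗ TensorProduct.map cA LinearMap.id

/-- induced right coaction on `D = A ⊗ B` -/
def dCoactR (cB : B →ₗ[k] B ⊗[k] H) : A ⊗[k] B →ₗ[k] (A ⊗[k] B) ⊗[k] H :=
  asr k A B H ∘ₗ TensorProduct.map LinearMap.id cB

/-- tensor product comultiplication on `D = A ⊗ B` -/
def dComul (ΔA : A →ₗ[k] A ⊗[k] A) (ΔB : B →ₗ[k] B ⊗[k] B) :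
    A ⊗[k] B →ₗ[k] (A ⊗[k] B) ⊗[k] (A ⊗[k] B) :=
  tt k A A B B ∘ₗ TensorProduct.map ΔA ΔB

/-- tensor product counit on `D = A ⊗ B` -/
def dCounit (εA : A →ₗ[k] k) (εB : B →ₗ[k] k) : A ⊗[k] B →ₗ[k] k :=
  LinearMap.mul' k k ∘ₗ TensorProduct.map εA εB

/-- `(a ⊗ b) ⊗ h ↦ (a ⊗ h) ⊗ b` -/
def phiAB : (A ⊗[k] B) ⊗[k] H →ₗ[k] (A ⊗[k] H) ⊗[k] B :=
  asr k A H B ∘ₗ TensorProduct.map LinearMap.id (sw k B H) ∘ₗ asl k A B H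

end DoubleBiproduct

section Pointwise
variable (H : Type*) [Ring H] [Bialgebra k H]
variable (M N : Type*) [AddCommGroup M] [Module k M] [AddCommGroup N] [Module k N]

/-- left action on `M ⊗ N` through the first factor -/
def pActL (aLM : H ⊗[k] M →ₗ[k] M) : H ⊗[k] (M ⊗[k] N) →ₗ[k] M ⊗[k] N :=
  TensorProduct.map aLM LinearMap.id ∘ₗ asr k H M N

/-- right action on `M ⊗ N` through the second factor -/
def pActR (aRN : N ⊗[k] H →ₗ[k] N) : (M ⊗[k] N) ⊗[k] H →ₗ[k] M ⊗[k] N :=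
  TensorProduct.map LinearMap.id aRN ∘ₗ asl k M N H

/-- left coaction on `M ⊗ N` through the first factor -/
def pCoactL (cLM : M →ₗ[k] H ⊗[k] M) : M ⊗[k] N →ₗ[k] H ⊗[k] (M ⊗[k] N) :=
  asl k H M N ∘ₗ TensorProduct.map cLM LinearMap.id

/-- right coaction on `M ⊗ N` through the second factor -/
def pCoactR (cRN : N →ₗ[k] N ⊗[k] H) : M ⊗[k] N →ₗ[k] (M ⊗[k] N) ⊗[k] H :=
  asr k M N H ∘ₗ TensorProduct.map LinearMap.id cRN

end Pointwise

section Identities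
variable (H : Type*) [Ring H] [Bialgebra k H]
variable (D : Type*) [Ring D] [Algebra k D]

/-- `c₂ ⊗ (h₁ ⊗ (d₁⁽⁰⁾ ⊗ d₁⁽¹⁾)) ↦ (c₂⁽⁻¹⁾h₁·d₁⁽⁰⁾) ⊗ (c₂⁽⁰⁾·d₁⁽¹⁾)` -/
def Fmap (aL : H ⊗[k] D →ₗ[k] D) (aR : D ⊗[k] H →ₗ[k] D) (cL : D →ₗ[k] H ⊗[k] D) :
    D ⊗[k] (H ⊗[k] (D ⊗[k] H)) →ₗ[k] D ⊗[k] D :=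
  TensorProduct.map aL LinearMap.id
    ∘ₗ asr k H D D
    ∘ₗ TensorProduct.map LinearMap.id
        (sw k D D ∘ₗ TensorProduct.map aR LinearMap.id ∘ₗ asr k D H D
          ∘ₗ TensorProduct.map LinearMap.id (sw k D H))
    ∘ₗ TensorProduct.map (μH k H) LinearMap.id
    ∘ₗ tt k H D H (D ⊗[k] H)
    ∘ₗ TensorProduct.map cL LinearMap.id

/-- `(h₁⊗h₂)⊗(c⊗d) ↦ [c(h₁·d)]₁ ⊗ ([c(h₁·d)]₂⁽⁻¹⁾h₂ ⊗ [c(h₁·d)]₂⁽⁰⁾)` -/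
def L3map (aL : H ⊗[k] D →ₗ[k] D) (cL : D →ₗ[k] H ⊗[k] D) (Δd : D →ₗ[k] D ⊗[k] D) :
    (H ⊗[k] H) ⊗[k] (D ⊗[k] D) →ₗ[k] D ⊗[k] (H ⊗[k] D) :=
  TensorProduct.map LinearMap.id (TensorProduct.map (μH k H) LinearMap.id)
    ∘ₗ TensorProduct.map LinearMap.id (asr k H H D)
    ∘ₗ asl k D H (H ⊗[k] D)
    ∘ₗ tt k D H H D
    ∘ₗ TensorProduct.map (sw k H D) LinearMap.id
    ∘ₗ asr k H D (H ⊗[k] D)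
    ∘ₗ TensorProduct.map LinearMap.id (TensorProduct.map LinearMap.id cL)
    ∘ₗ TensorProduct.map LinearMap.id Δd
    ∘ₗ TensorProduct.map LinearMap.id (μD k)
    ∘ₗ asl k H D D
    ∘ₗ TensorProduct.map LinearMap.id aL
    ∘ₗ tt k H H D D
    ∘ₗ TensorProduct.map (sw k H H) LinearMap.id

/-- `((h₁⊗h₂)⊗h₃)⊗((c₁⊗c₂)⊗(d₁⊗d₂)) ↦`
`c₁(c₂⁽⁻¹⁾h₁·d₁⁽⁰⁾) ⊗ (c₂⁽⁰⁾⁽⁻¹⁾h₂d₂⁽⁻¹⁾ ⊗ (c₂⁽⁰⁾⁽⁰⁾·d₁⁽¹⁾)(h₃·d₂⁽⁰⁾))` -/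
def R3map (aL : H ⊗[k] D →ₗ[k] D) (aR : D ⊗[k] H →ₗ[k] D)
    (cL : D →ₗ[k] H ⊗[k] D) (cR : D →ₗ[k] D ⊗[k] H) :
    ((H ⊗[k] H) ⊗[k] H) ⊗[k] ((D ⊗[k] D) ⊗[k] (D ⊗[k] D)) →ₗ[k]
      D ⊗[k] (H ⊗[k] D) :=
  TensorProduct.map (μD k) LinearMap.id
    ∘ₗ asr k D D (H ⊗[k] D)
    ∘ₗ TensorProduct.map LinearMap.id
        (asl k D H D
          ∘ₗ TensorProduct.map LinearMap.id (μD k)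
          ∘ₗ TensorProduct.map (TensorProduct.map aL (μH k H)) (TensorProduct.map aR aL)
          ∘ₗ TensorProduct.map (tt k H H D H) (tt k D H H D)
          ∘ₗ tt k (H ⊗[k] H) (D ⊗[k] H) (D ⊗[k] H) (H ⊗[k] D)
          ∘ₗ TensorProduct.map LinearMap.id (tt k D H H D))
    ∘ₗ asl k D ((H ⊗[k] H) ⊗[k] (D ⊗[k] H)) ((D ⊗[k] H) ⊗[k] (H ⊗[k] D))
    ∘ₗ TensorProduct.map
        (TensorProduct.map LinearMap.id
          (TensorProduct.map (TensorProduct.map (μH k H) (μH k H)) LinearMap.id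
            ∘ₗ TensorProduct.map (tt k H H H H) LinearMap.id
            ∘ₗ tt k (H ⊗[k] H) D (H ⊗[k] H) H))
        LinearMap.id
    ∘ₗ TensorProduct.map (asl k D ((H ⊗[k] H) ⊗[k] D) ((H ⊗[k] H) ⊗[k] H)) LinearMap.id
    ∘ₗ TensorProduct.map (sw k ((H ⊗[k] H) ⊗[k] H) (D ⊗[k] ((H ⊗[k] H) ⊗[k] D))) LinearMap.id
    ∘ₗ asr k ((H ⊗[k] H) ⊗[k] H) (D ⊗[k] ((H ⊗[k] H) ⊗[k] D))
        ((D ⊗[k] H) ⊗[k] (H ⊗[k] D))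
    ∘ₗ TensorProduct.map LinearMap.id
        (TensorProduct.map (TensorProduct.map LinearMap.id (asr k H H D)) LinearMap.id)
    ∘ₗ TensorProduct.map LinearMap.id
        (TensorProduct.map
          (TensorProduct.map LinearMap.id (TensorProduct.map LinearMap.id cL ∘ₗ cL))
          (TensorProduct.map cR cL))

end Identities

section Radford
variable (H : Type*) [Ring H] [Bialgebra k H]
variable (D : Type*) [Ring D] [Algebra k D]

/-- Radford's admissible-pair conditions for a left module algebra, left comodule
coalgebra `D` -/
def RadfordAdmissible (aL : H ⊗[k] D →ₗ[k] D) (cL : D →ₗ[k] H ⊗[k] D)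
    (Δd : D →ₗ[k] D ⊗[k] D) (εd : D →ₗ[k] k) : Prop :=
  IsLeftModule k H aL ∧ IsLeftModuleAlgebra k H aL ∧ IsLeftComodule k H cL ∧
  IsCoalg k Δd εd ∧ IsLComodCoalg k H cL Δd εd ∧ CondCounitAlg k εd ∧
  (∀ (h : H) (d : D), εd (aL (h ⊗ₜ d)) = εH k H h * εd d) ∧
  Δd 1 = 1 ⊗ₜ 1 ∧ cL 1 = 1 ⊗ₜ 1 ∧
  (∀ c d : D, cL (c * d)
      = TensorProduct.map (μH k H) (μD k) (tt k H D H D (cL c ⊗ₜ cL d))) ∧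
  (∀ (h : H) (d : D), Δd (aL (h ⊗ₜ d))
      = TensorProduct.map aL aL (tt k H H D D (δH k H h ⊗ₜ Δd d))) ∧
  (∀ c d : D, Δd (c * d)
      = TensorProduct.map (μD k) (μD k)
          (middle k (braidYDl k H D cL aL) (Δd c ⊗ₜ Δd d))) ∧
  CondYDl k H aL cL

/-- the element `d(h₁·d') ⊗ h₂h'` of the Radford biproduct -/
def radMulExpr (aL : H ⊗[k] D →ₗ[k] D) (d : D) (h : H) (d' : D) (h' : H) : D ⊗[k] H :=
  TensorProduct.map (μD k) (μH k H ∘ₗ sw k H H)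
    (tt k D H D H ((d ⊗ₜ h') ⊗ₜ Yel k H aL h d'))

/-- comultiplication map of the Radford biproduct:
`(d₁⊗d₂)⊗(h₁⊗h₂) ↦ (d₁ ⊗ d₂⁽⁻¹⁾h₁) ⊗ (d₂⁽⁰⁾ ⊗ h₂)` -/
def WRad (cL : D →ₗ[k] H ⊗[k] D) :
    (D ⊗[k] D) ⊗[k] (H ⊗[k] H) →ₗ[k] (D ⊗[k] H) ⊗[k] (D ⊗[k] H) :=
  TensorProduct.map (TensorProduct.map LinearMap.id (μH k H) ∘ₗ asl k D H H) LinearMap.id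
    ∘ₗ tt k (D ⊗[k] H) D H H
    ∘ₗ TensorProduct.map (asr k D H D) LinearMap.id
    ∘ₗ TensorProduct.map (TensorProduct.map LinearMap.id cL) LinearMap.id

/-- `(h₁·d) ⊗ h₂` reversed version: `(h₂·d) ⊗ h₁` -/
def Y2el (aL : H ⊗[k] D →ₗ[k] D) (h : H) (d : D) : D ⊗[k] H :=
  TensorProduct.comm k H D
    (TensorProduct.map LinearMap.id aL (TensorProduct.assoc k H H D (δH k H h ⊗ₜ d)))

/-- `(d·h₁) ⊗ h₂` -/
def X1el (aR : D ⊗[k] H →ₗ[k] D) (d : D) (h : H) : D ⊗[k] H :=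
  TensorProduct.map aR LinearMap.id ((TensorProduct.assoc k D H H).symm (d ⊗ₜ δH k H h))

end Radford
end LRPaper

namespace LRPaper

section Aux1
variable {k : Type*} [CommRing k] {H : Type*} [Ring H] [Bialgebra k H]
variable {D : Type*} [AddCommGroup D] [Module k D]

@[simp] lemma μH_apply (a b : H) : μH k H (a ⊗ₜ[k] b) = a * b := by
  simp [μH, LinearMap.mul'_apply]

/-- first leg combiner of `Wmap` -/
def A1 : (D ⊗[k] H) ⊗[k] H →ₗ[k] D ⊗[k] H :=
  TensorProduct.map LinearMap.id (μH k H) ∘ₗ asl k D H H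

/-- second leg combiner of `Wmap` -/
def A2 : (H ⊗[k] D) ⊗[k] H →ₗ[k] D ⊗[k] H :=
  TensorProduct.map LinearMap.id (μH k H ∘ₗ sw k H H) ∘ₗ asl k D H H
    ∘ₗ TensorProduct.map (sw k H D) LinearMap.id

/-- the structural part of `Wmap` (after the coactions have been applied) -/
def Wc : ((D ⊗[k] H) ⊗[k] (H ⊗[k] D)) ⊗[k] (H ⊗[k] H) →ₗ[k] (D ⊗[k] H) ⊗[k] (D ⊗[k] H) :=
  TensorProduct.map A1 A2 ∘ₗ tt k (D ⊗[k] H) (H ⊗[k] D) H H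
    ∘ₗ TensorProduct.map (tt k D H H D) LinearMap.id

lemma Wc_tmul (p₁ : D) (p₂ q₁ : H) (q₂ : D) (g h' : H) :
    (Wc (((p₁ ⊗ₜ[k] p₂) ⊗ₜ[k] (q₁ ⊗ₜ[k] q₂)) ⊗ₜ[k] (g ⊗ₜ[k] h')))
      = (p₁ ⊗ₜ[k] (q₁ * g)) ⊗ₜ[k] (q₂ ⊗ₜ[k] (h' * p₂)) := by
  simp [Wc, A1, A2, tt, asl, sw, μH, LinearMap.mul'_apply]

lemma Wmap_eq (cL : D →ₗ[k] H ⊗[k] D) (cR : D →ₗ[k] D ⊗[k] H) :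
    Wmap k H cL cR
      = Wc ∘ₗ TensorProduct.map (TensorProduct.map cR cL) LinearMap.id := rfl

end Aux1
section Aux2
variable {k : Type*} [CommRing k] {H : Type*} [Ring H] [Bialgebra k H]
variable {D : Type*} [AddCommGroup D] [Module k D]

/-- contract second factor by a functional -/
def ctr2 {M N : Type*} [AddCommGroup M] [Module k M] [AddCommGroup N] [Module k N]
    (f : N →ₗ[k] k) : M ⊗[k] N →ₗ[k] M :=
  (TensorProduct.rid k M).toLinearMap ∘ₗ TensorProduct.map LinearMap.id f

/-- contract first factor by a functional -/
def ctr1 {M N : Type*} [AddCommGroup M] [Module k M] [AddCommGroup N] [Module k N]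
    (f : M →ₗ[k] k) : M ⊗[k] N →ₗ[k] N :=
  (TensorProduct.lid k N).toLinearMap ∘ₗ TensorProduct.map f LinearMap.id

@[simp] lemma ctr2_tmul {M N : Type*} [AddCommGroup M] [Module k M] [AddCommGroup N]
    [Module k N] (f : N →ₗ[k] k) (m : M) (n : N) : ctr2 f (m ⊗ₜ[k] n) = f n • m := by
  simp [ctr2]

@[simp] lemma ctr1_tmul {M N : Type*} [AddCommGroup M] [Module k M] [AddCommGroup N]
    [Module k N] (f : M →ₗ[k] k) (m : M) (n : N) : ctr1 f (m ⊗ₜ[k] n) = f m • n := by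
  simp [ctr1]

lemma ctr2_counitH (h : H) : ctr2 (εH k H) (δH k H h) = h := by
  have := LinearMap.congr_fun (Coalgebra.lTensor_counit_comp_comul (R := k) (A := H)) h
  simp only [LinearMap.comp_apply, LinearMap.lTensor] at this
  simp [ctr2, εH, δH, this]

lemma ctr1_counitH (h : H) : ctr1 (εH k H) (δH k H h) = h := by
  have := LinearMap.congr_fun (Coalgebra.rTensor_counit_comp_comul (R := k) (A := H)) h
  simp only [LinearMap.comp_apply, LinearMap.rTensor] at this
  simp [ctr1, εH, δH, this]

lemma CRa (εd : D →ₗ[k] k) :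
    (ctr2 (smashCounit k H εd)) ∘ₗ (Wc (k := k) (H := H) (D := D))
      = A1 ∘ₗ TensorProduct.map
          (TensorProduct.map (ctr2 (εH k H)) (ctr2 εd)) (ctr2 (εH k H)) := by
  ext p₁ p₂ q₁ q₂ g h'
  simp [Wc_tmul, smashCounit, A1, asl, μH, εH, LinearMap.mul'_apply, Bialgebra.counit_mul,
    TensorProduct.tmul_smul, ← TensorProduct.smul_tmul', smul_smul]
  congr 1
  ring

lemma CRb (εd : D →ₗ[k] k) :
    (A1 (k := k) (H := H) (D := D)) ∘ₗ
        TensorProduct.map (TensorProduct.map LinearMap.id (Algebra.linearMap k H ∘ₗ εd))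
          LinearMap.id
      = TensorProduct.map (ctr2 εd) LinearMap.id := by
  ext x y z
  simp [A1, asl, μH, LinearMap.mul'_apply, Algebra.algebraMap_eq_smul_one, smul_mul_assoc,
    TensorProduct.tmul_smul, TensorProduct.smul_tmul']

lemma CLa (εd : D →ₗ[k] k) :
    (ctr1 (smashCounit k H εd)) ∘ₗ (Wc (k := k) (H := H) (D := D))
      = A2 ∘ₗ TensorProduct.map
          (TensorProduct.map (ctr1 εd) (ctr1 (εH k H))) (ctr1 (εH k H)) := by
  ext p₁ p₂ q₁ q₂ g h'
  simp [Wc_tmul, smashCounit, A2, asl, sw, μH, εH, LinearMap.mul'_apply, Bialgebra.counit_mul,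
    TensorProduct.tmul_smul, ← TensorProduct.smul_tmul', smul_smul]
  congr 1
  ring

lemma CLb (εd : D →ₗ[k] k) :
    (A2 (k := k) (H := H) (D := D)) ∘ₗ
        TensorProduct.map (TensorProduct.map (Algebra.linearMap k H ∘ₗ εd) LinearMap.id)
          LinearMap.id
      = TensorProduct.map (ctr1 εd) LinearMap.id := by
  ext x y z
  simp [A2, asl, sw, μH, LinearMap.mul'_apply, Algebra.algebraMap_eq_smul_one, mul_smul_comm,
    TensorProduct.tmul_smul, TensorProduct.smul_tmul']

end Aux2
section Aux3
variable {k : Type*} [CommRing k] {H : Type*} [Ring H] [Bialgebra k H]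
variable {D : Type*} [AddCommGroup D] [Module k D]
variable (cL : D →ₗ[k] H ⊗[k] D) (cR : D →ₗ[k] D ⊗[k] H)
variable (Δd : D →ₗ[k] D ⊗[k] D) (εd : D →ₗ[k] k)

lemma counit_right_map
    (h1 : ∀ m : D, TensorProduct.rid k D (TensorProduct.map LinearMap.id (εH k H) (cR m)) = m)
    (h2 : ∀ m : D, TensorProduct.rid k H (TensorProduct.map LinearMap.id εd (cL m)) = εd m • 1)
    (h3 : ∀ m : D, TensorProduct.rid k D (TensorProduct.map LinearMap.id εd (Δd m)) = m) :
    ctr2 (smashCounit k H εd) ∘ₗ Wmap k H cL cR ∘ₗ TensorProduct.map Δd (δH k H)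
      = LinearMap.id := by
  have e1 : ctr2 (εH k H) ∘ₗ cR = LinearMap.id :=
    LinearMap.ext fun m => by simpa [ctr2] using h1 m
  have e2 : ctr2 εd ∘ₗ cL = Algebra.linearMap k H ∘ₗ εd :=
    LinearMap.ext fun m => by
      simp [ctr2, Algebra.algebraMap_eq_smul_one]
      simpa [ctr2] using h2 m
  have e3 : ctr2 εd ∘ₗ Δd = LinearMap.id :=
    LinearMap.ext fun m => by simpa [ctr2] using h3 m
  have e4 : ctr2 (εH k H) ∘ₗ δH k H = LinearMap.id := LinearMap.ext fun h => ctr2_counitH h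
  rw [Wmap_eq]
  simp only [← LinearMap.comp_assoc]
  rw [CRa]
  simp only [LinearMap.comp_assoc]
  rw [show (TensorProduct.map (TensorProduct.map (ctr2 (εH k H)) (ctr2 εd))
        (ctr2 (εH k H))) ∘ₗ
        (TensorProduct.map (TensorProduct.map cR cL) LinearMap.id) ∘ₗ
        (TensorProduct.map Δd (δH k H))
      = TensorProduct.map (TensorProduct.map (ctr2 (εH k H) ∘ₗ cR) (ctr2 εd ∘ₗ cL) ∘ₗ Δd)
          (ctr2 (εH k H) ∘ₗ δH k H) by
    simp only [← LinearMap.comp_assoc, ← TensorProduct.map_comp, LinearMap.comp_id,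
      LinearMap.id_comp]]
  rw [e1, e2, e4]
  rw [show (TensorProduct.map
        ((TensorProduct.map LinearMap.id (Algebra.linearMap k H ∘ₗ εd)) ∘ₗ Δd)
        (LinearMap.id : H →ₗ[k] H))
      = (TensorProduct.map (TensorProduct.map LinearMap.id (Algebra.linearMap k H ∘ₗ εd))
          LinearMap.id) ∘ₗ TensorProduct.map Δd LinearMap.id by
    rw [← TensorProduct.map_comp, LinearMap.comp_id]]
  rw [← LinearMap.comp_assoc, CRb, ← TensorProduct.map_comp, LinearMap.comp_id, e3,
    TensorProduct.map_id]

lemma counit_left_map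
    (h1 : ∀ m : D, TensorProduct.lid k D (TensorProduct.map (εH k H) LinearMap.id (cL m)) = m)
    (h2 : ∀ m : D, TensorProduct.lid k H (TensorProduct.map εd LinearMap.id (cR m)) = εd m • 1)
    (h3 : ∀ m : D, TensorProduct.lid k D (TensorProduct.map εd LinearMap.id (Δd m)) = m) :
    ctr1 (smashCounit k H εd) ∘ₗ Wmap k H cL cR ∘ₗ TensorProduct.map Δd (δH k H)
      = LinearMap.id := by
  have e1 : ctr1 (εH k H) ∘ₗ cL = LinearMap.id :=
    LinearMap.ext fun m => by simpa [ctr1] using h1 m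
  have e2 : ctr1 εd ∘ₗ cR = Algebra.linearMap k H ∘ₗ εd :=
    LinearMap.ext fun m => by
      simp [ctr1, Algebra.algebraMap_eq_smul_one]
      simpa [ctr1] using h2 m
  have e3 : ctr1 εd ∘ₗ Δd = LinearMap.id :=
    LinearMap.ext fun m => by simpa [ctr1] using h3 m
  have e4 : ctr1 (εH k H) ∘ₗ δH k H = LinearMap.id := LinearMap.ext fun h => ctr1_counitH h
  rw [Wmap_eq]
  simp only [← LinearMap.comp_assoc]
  rw [CLa]
  simp only [LinearMap.comp_assoc]
  rw [show (TensorProduct.map (TensorProduct.map (ctr1 εd) (ctr1 (εH k H)))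
        (ctr1 (εH k H))) ∘ₗ
        (TensorProduct.map (TensorProduct.map cR cL) LinearMap.id) ∘ₗ
        (TensorProduct.map Δd (δH k H))
      = TensorProduct.map (TensorProduct.map (ctr1 εd ∘ₗ cR) (ctr1 (εH k H) ∘ₗ cL) ∘ₗ Δd)
          (ctr1 (εH k H) ∘ₗ δH k H) by
    simp only [← LinearMap.comp_assoc, ← TensorProduct.map_comp, LinearMap.comp_id,
      LinearMap.id_comp]]
  rw [e1, e2, e4]
  rw [show (TensorProduct.map
        ((TensorProduct.map (Algebra.linearMap k H ∘ₗ εd) LinearMap.id) ∘ₗ Δd)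
        (LinearMap.id : H →ₗ[k] H))
      = (TensorProduct.map (TensorProduct.map (Algebra.linearMap k H ∘ₗ εd) LinearMap.id)
          LinearMap.id) ∘ₗ TensorProduct.map Δd LinearMap.id by
    rw [← TensorProduct.map_comp, LinearMap.comp_id]]
  rw [← LinearMap.comp_assoc, CLb, ← TensorProduct.map_comp, LinearMap.comp_id, e3,
    TensorProduct.map_id]

end Aux3
section Aux4
variable {k : Type*} [CommRing k] {H : Type*} [Ring H] [Bialgebra k H]
variable {D : Type*} [AddCommGroup D] [Module k D]

/-- multiplication of `H ⊗ H` -/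
def μHH : (H ⊗[k] H) ⊗[k] (H ⊗[k] H) →ₗ[k] H ⊗[k] H := LinearMap.mul' k (H ⊗[k] H)

/-- combine a `(D⊗D)-slot ⊗ (H⊗H)-slot ⊗ (H⊗H)-slot` into the inner `Wc` input,
multiplying the two `H⊗H` parts -/
def leg1 : ((((D ⊗[k] H) ⊗[k] (H ⊗[k] D)) ⊗[k] (H ⊗[k] H)) ⊗[k] (H ⊗[k] H)) →ₗ[k]
    (D ⊗[k] H) ⊗[k] (D ⊗[k] H) :=
  Wc ∘ₗ TensorProduct.map LinearMap.id μHH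
    ∘ₗ asl k ((D ⊗[k] H) ⊗[k] (H ⊗[k] D)) (H ⊗[k] H) (H ⊗[k] H)

def leg2 : (((H ⊗[k] H) ⊗[k] ((D ⊗[k] H) ⊗[k] (H ⊗[k] D))) ⊗[k] (H ⊗[k] H)) →ₗ[k]
    (D ⊗[k] H) ⊗[k] (D ⊗[k] H) :=
  Wc ∘ₗ TensorProduct.map LinearMap.id μHH
    ∘ₗ asl k ((D ⊗[k] H) ⊗[k] (H ⊗[k] D)) (H ⊗[k] H) (H ⊗[k] H)
    ∘ₗ sw k (H ⊗[k] H) (((D ⊗[k] H) ⊗[k] (H ⊗[k] D)) ⊗[k] (H ⊗[k] H))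
    ∘ₗ asl k (H ⊗[k] H) ((D ⊗[k] H) ⊗[k] (H ⊗[k] D)) (H ⊗[k] H)

/-- purified form of `assoc ∘ (Δs ⊗ 1) ∘ Wc` -/
def Phi1 : (((((D ⊗[k] H) ⊗[k] (H ⊗[k] D)) ⊗[k] H) ⊗[k] ((H ⊗[k] H) ⊗[k] D)) ⊗[k]
      ((H ⊗[k] H) ⊗[k] H)) →ₗ[k]
    (D ⊗[k] H) ⊗[k] ((D ⊗[k] H) ⊗[k] (D ⊗[k] H)) :=
  asl k (D ⊗[k] H) (D ⊗[k] H) (D ⊗[k] H)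
    ∘ₗ TensorProduct.map leg1 A2
    ∘ₗ tt k (((D ⊗[k] H) ⊗[k] (H ⊗[k] D)) ⊗[k] (H ⊗[k] H)) (H ⊗[k] D) (H ⊗[k] H) H
    ∘ₗ TensorProduct.map (tt k ((D ⊗[k] H) ⊗[k] (H ⊗[k] D)) H (H ⊗[k] H) D) LinearMap.id

/-- purified form of `(1 ⊗ Δs) ∘ Wc` -/
def Phi2 : ((D ⊗[k] (H ⊗[k] H)) ⊗[k] (H ⊗[k] ((D ⊗[k] H) ⊗[k] (H ⊗[k] D)))) ⊗[k]
      (H ⊗[k] (H ⊗[k] H)) →ₗ[k]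
    (D ⊗[k] H) ⊗[k] ((D ⊗[k] H) ⊗[k] (D ⊗[k] H)) :=
  TensorProduct.map A1 leg2
    ∘ₗ tt k (D ⊗[k] H) ((H ⊗[k] H) ⊗[k] ((D ⊗[k] H) ⊗[k] (H ⊗[k] D))) H (H ⊗[k] H)
    ∘ₗ TensorProduct.map (tt k D (H ⊗[k] H) H ((D ⊗[k] H) ⊗[k] (H ⊗[k] D))) LinearMap.id

def C1 : ((D ⊗[k] (H ⊗[k] H)) ⊗[k] (H ⊗[k] (D ⊗[k] H))) ⊗[k] (H ⊗[k] (H ⊗[k] D)) →ₗ[k]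
    ((((D ⊗[k] H) ⊗[k] (H ⊗[k] D)) ⊗[k] H) ⊗[k] ((H ⊗[k] H) ⊗[k] D)) :=
  TensorProduct.map
    (TensorProduct.map LinearMap.id (μH k H)
      ∘ₗ tt k (D ⊗[k] H) H (H ⊗[k] D) H
      ∘ₗ TensorProduct.map (asr k D H H) (asr k H D H))
    (asr k H H D)

def C2 : (H ⊗[k] (D ⊗[k] H)) ⊗[k] (H ⊗[k] (H ⊗[k] D)) →ₗ[k]
    H ⊗[k] ((D ⊗[k] H) ⊗[k] (H ⊗[k] D)) :=
  TensorProduct.map (μH k H) LinearMap.id ∘ₗ tt k H (D ⊗[k] H) H (H ⊗[k] D)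

/-- the big structural identity -/
lemma STRUCT :
    (Phi1 (k := k) (H := H) (D := D)) ∘ₗ
        (TensorProduct.map
          (C1 ∘ₗ asr k (D ⊗[k] (H ⊗[k] H)) (H ⊗[k] (D ⊗[k] H)) (H ⊗[k] (H ⊗[k] D)))
          (asr k H H H))
      = Phi2 ∘ₗ TensorProduct.map (TensorProduct.map LinearMap.id C2) LinearMap.id := by
  ext
  simp [Phi1, Phi2, leg1, leg2, C1, C2, Wc, A1, A2, μHH, μH, tt, asl, asr, sw,
    LinearMap.mul'_apply, Algebra.TensorProduct.tmul_mul_tmul, mul_assoc]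

end Aux4
section Aux5
variable {k : Type*} [CommRing k] {H : Type*} [Ring H] [Bialgebra k H]
variable {D : Type*} [AddCommGroup D] [Module k D]
variable (cL : D →ₗ[k] H ⊗[k] D) (cR : D →ₗ[k] D ⊗[k] H)
variable (Δd : D →ₗ[k] D ⊗[k] D)

/-- extraction lemma for the left associativity leg -/
lemma E1 (Δs : D ⊗[k] H →ₗ[k] (D ⊗[k] H) ⊗[k] (D ⊗[k] H))
    (hΔ : ∀ (d : D) (h : H), Δs (d ⊗ₜ h) = Wmap k H cL cR (Δd d ⊗ₜ δH k H h)) :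
    (TensorProduct.assoc k (D ⊗[k] H) (D ⊗[k] H) (D ⊗[k] H)).toLinearMap
        ∘ₗ TensorProduct.map Δs LinearMap.id ∘ₗ (Wc (k := k) (H := H) (D := D))
      = Phi1 ∘ₗ TensorProduct.map
          (TensorProduct.map
            (TensorProduct.map (TensorProduct.map cR cL ∘ₗ Δd) LinearMap.id)
            (TensorProduct.map (δH k H) LinearMap.id))
          (TensorProduct.map (δH k H) LinearMap.id) := by
  ext p₁ p₂ q₁ q₂ g h'
  simp only [TensorProduct.AlgebraTensorModule.curry_apply, TensorProduct.curry_apply,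
    LinearMap.coe_restrictScalars, LinearMap.comp_apply, TensorProduct.map_tmul,
    LinearMap.id_apply, Wc_tmul]
  rw [hΔ]
  simp [Wmap_eq, δH, Bialgebra.comul_mul, Phi1, leg1, A2, μHH, tt, asl, asr, sw,
    LinearMap.mul'_apply]

/-- extraction lemma for the right associativity leg -/
lemma E2 (Δs : D ⊗[k] H →ₗ[k] (D ⊗[k] H) ⊗[k] (D ⊗[k] H))
    (hΔ : ∀ (d : D) (h : H), Δs (d ⊗ₜ h) = Wmap k H cL cR (Δd d ⊗ₜ δH k H h)) :
    TensorProduct.map LinearMap.id Δs ∘ₗ (Wc (k := k) (H := H) (D := D))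
      = Phi2 ∘ₗ TensorProduct.map
          (TensorProduct.map
            (TensorProduct.map LinearMap.id (δH k H))
            (TensorProduct.map LinearMap.id (TensorProduct.map cR cL ∘ₗ Δd)))
          (TensorProduct.map LinearMap.id (δH k H)) := by
  ext p₁ p₂ q₁ q₂ g h'
  simp only [TensorProduct.AlgebraTensorModule.curry_apply, TensorProduct.curry_apply,
    LinearMap.coe_restrictScalars, LinearMap.comp_apply, TensorProduct.map_tmul,
    LinearMap.id_apply, Wc_tmul]
  rw [hΔ]
  simp [Wmap_eq, δH, Bialgebra.comul_mul, Phi2, leg2, A1, μHH, tt, asl, asr, sw,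
    LinearMap.mul'_apply]

/-- naturality: applying maps to the two `D`-slots commutes with the middle-merge -/
lemma NAT1 :
    TensorProduct.map (TensorProduct.map cR cL) LinearMap.id
        ∘ₗ TensorProduct.map LinearMap.id (μH k H) ∘ₗ tt k D H D H
      = TensorProduct.map LinearMap.id (μH k H)
          ∘ₗ tt k (D ⊗[k] H) H (H ⊗[k] D) H
          ∘ₗ TensorProduct.map (TensorProduct.map cR LinearMap.id)
              (TensorProduct.map cL LinearMap.id) := by
  ext
  simp [TensorProduct.AlgebraTensorModule.curry_apply, TensorProduct.curry_apply,
    LinearMap.coe_restrictScalars, tt, μH]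

lemma NAT2 :
    TensorProduct.map LinearMap.id (TensorProduct.map cR cL)
        ∘ₗ TensorProduct.map (μH k H) LinearMap.id ∘ₗ tt k H D H D
      = TensorProduct.map (μH k H) LinearMap.id
          ∘ₗ tt k H (D ⊗[k] H) H (H ⊗[k] D)
          ∘ₗ TensorProduct.map (TensorProduct.map LinearMap.id cR)
              (TensorProduct.map LinearMap.id cL) := by
  ext
  simp [TensorProduct.AlgebraTensorModule.curry_apply, TensorProduct.curry_apply,
    LinearMap.coe_restrictScalars, tt, μH]

/-- naturality of the associator -/
lemma NAT3 {M N P M' N' P' : Type*} [AddCommGroup M] [Module k M] [AddCommGroup N] [Module k N]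
    [AddCommGroup P] [Module k P] [AddCommGroup M'] [Module k M'] [AddCommGroup N'] [Module k N']
    [AddCommGroup P'] [Module k P'] (f : M →ₗ[k] M') (g : N →ₗ[k] N') (h : P →ₗ[k] P') :
    TensorProduct.map (TensorProduct.map f g) h ∘ₗ asr k M N P
      = asr k M' N' P' ∘ₗ TensorProduct.map f (TensorProduct.map g h) := by
  ext
  simp [TensorProduct.AlgebraTensorModule.curry_apply, TensorProduct.curry_apply,
    LinearMap.coe_restrictScalars, asr]

end Aux5
section Aux6
variable {k : Type*} [CommRing k] {H : Type*} [Ring H] [Bialgebra k H]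
variable {D : Type*} [AddCommGroup D] [Module k D]

/-- fusing two applied `TensorProduct.map`s -/
lemma map_fuse {A B C A' B' C' : Type*} [AddCommMonoid A] [Module k A] [AddCommMonoid B]
    [Module k B] [AddCommMonoid C] [Module k C] [AddCommMonoid A'] [Module k A']
    [AddCommMonoid B'] [Module k B'] [AddCommMonoid C'] [Module k C']
    (f₂ : B →ₗ[k] C) (f₁ : A →ₗ[k] B) (g₂ : B' →ₗ[k] C') (g₁ : A' →ₗ[k] B')
    (x : A ⊗[k] A') :
    TensorProduct.map f₂ g₂ (TensorProduct.map f₁ g₁ x)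
      = TensorProduct.map (f₂ ∘ₗ f₁) (g₂ ∘ₗ g₁) x :=
  (LinearMap.congr_fun (TensorProduct.map_comp f₂ g₂ f₁ g₁) x).symm

variable (cL : D →ₗ[k] H ⊗[k] D) (cR : D →ₗ[k] D ⊗[k] H)
variable (Δd : D →ₗ[k] D ⊗[k] D)

/-- q-slot lemma -/
lemma slotQ
    (hl1 : ∀ m : D, TensorProduct.map (μH k H) LinearMap.id
        (tt k H D H D (TensorProduct.map cL cL (Δd m)))
      = TensorProduct.map LinearMap.id Δd (cL m)) :
    TensorProduct.map LinearMap.id (TensorProduct.map cR cL ∘ₗ Δd) ∘ₗ cL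
      = C2 ∘ₗ TensorProduct.map (TensorProduct.map LinearMap.id cR ∘ₗ cL)
          (TensorProduct.map LinearMap.id cL ∘ₗ cL) ∘ₗ Δd := by
  have mA : TensorProduct.map LinearMap.id Δd ∘ₗ cL
      = TensorProduct.map (μH k H) LinearMap.id ∘ₗ tt k H D H D
          ∘ₗ TensorProduct.map cL cL ∘ₗ Δd :=
    LinearMap.ext fun m => by
      simpa [LinearMap.comp_apply] using (hl1 m).symm
  have step1 : TensorProduct.map LinearMap.id (TensorProduct.map cR cL ∘ₗ Δd) ∘ₗ cL
      = TensorProduct.map LinearMap.id (TensorProduct.map cR cL)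
          ∘ₗ (TensorProduct.map LinearMap.id Δd ∘ₗ cL) := by
    rw [← LinearMap.comp_assoc, ← TensorProduct.map_comp, LinearMap.comp_id]
  rw [step1, mA,
    show TensorProduct.map LinearMap.id (TensorProduct.map cR cL)
        ∘ₗ (TensorProduct.map (μH k H) LinearMap.id ∘ₗ tt k H D H D
            ∘ₗ TensorProduct.map cL cL ∘ₗ Δd)
      = (TensorProduct.map LinearMap.id (TensorProduct.map cR cL)
          ∘ₗ TensorProduct.map (μH k H) LinearMap.id ∘ₗ tt k H D H D)
          ∘ₗ TensorProduct.map cL cL ∘ₗ Δd from rfl,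
    NAT2 cL cR]
  refine LinearMap.ext fun m => ?_
  simp only [LinearMap.comp_apply, C2, map_fuse, LinearMap.comp_id, LinearMap.id_comp]

/-- D-slot lemma -/
lemma slotD
    (hL2 : ∀ m : D, TensorProduct.map LinearMap.id cL (cL m)
        = TensorProduct.assoc k H H D (TensorProduct.map (δH k H) LinearMap.id (cL m)))
    (hR2 : ∀ m : D, TensorProduct.map cR LinearMap.id (cR m)
        = (TensorProduct.assoc k D H H).symm (TensorProduct.map LinearMap.id (δH k H) (cR m)))
    (hLR : ∀ m : D, TensorProduct.map LinearMap.id cR (cL m)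
        = TensorProduct.assoc k H D H (TensorProduct.map cL LinearMap.id (cR m)))
    (hc3 : ∀ m : D, TensorProduct.assoc k D D D
          (TensorProduct.map Δd LinearMap.id (Δd m))
        = TensorProduct.map LinearMap.id Δd (Δd m))
    (hr1 : ∀ m : D, TensorProduct.map LinearMap.id (μH k H)
        (tt k D H D H (TensorProduct.map cR cR (Δd m)))
      = TensorProduct.map Δd LinearMap.id (cR m)) :
    TensorProduct.map
        (TensorProduct.map (TensorProduct.map cR cL ∘ₗ Δd) LinearMap.id ∘ₗ cR)
        (TensorProduct.map (δH k H) LinearMap.id ∘ₗ cL) ∘ₗ Δd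
      = (C1 ∘ₗ asr k (D ⊗[k] (H ⊗[k] H)) (H ⊗[k] (D ⊗[k] H)) (H ⊗[k] (H ⊗[k] D)))
          ∘ₗ TensorProduct.map (TensorProduct.map LinearMap.id (δH k H) ∘ₗ cR)
              (TensorProduct.map (TensorProduct.map LinearMap.id cR ∘ₗ cL)
                  (TensorProduct.map LinearMap.id cL ∘ₗ cL) ∘ₗ Δd)
          ∘ₗ Δd := by
  have mB : TensorProduct.map Δd LinearMap.id ∘ₗ cR
      = TensorProduct.map LinearMap.id (μH k H) ∘ₗ tt k D H D H
          ∘ₗ TensorProduct.map cR cR ∘ₗ Δd :=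
    LinearMap.ext fun m => by simpa [LinearMap.comp_apply] using (hr1 m).symm
  have mRho : TensorProduct.map cR LinearMap.id ∘ₗ cR
      = asr k D H H ∘ₗ TensorProduct.map LinearMap.id (δH k H) ∘ₗ cR :=
    LinearMap.ext fun m => by simp [LinearMap.comp_apply, hR2 m, asr]
  have mC : TensorProduct.map cL LinearMap.id ∘ₗ cR
      = asr k H D H ∘ₗ TensorProduct.map LinearMap.id cR ∘ₗ cL :=
    LinearMap.ext fun m => by simp [LinearMap.comp_apply, hLR m, asr]
  have mLam : TensorProduct.map (δH k H) LinearMap.id ∘ₗ cL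
      = asr k H H D ∘ₗ TensorProduct.map LinearMap.id cL ∘ₗ cL :=
    LinearMap.ext fun m => by simp [LinearMap.comp_apply, hL2 m, asr]
  have mDel : TensorProduct.map Δd LinearMap.id ∘ₗ Δd
      = asr k D D D ∘ₗ TensorProduct.map LinearMap.id Δd ∘ₗ Δd :=
    LinearMap.ext fun m => by simp [LinearMap.comp_apply, ← hc3 m, asr]
  -- p-part
  have pPart : TensorProduct.map (TensorProduct.map cR cL ∘ₗ Δd) LinearMap.id ∘ₗ cR
      = (TensorProduct.map LinearMap.id (μH k H) ∘ₗ tt k (D ⊗[k] H) H (H ⊗[k] D) H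
          ∘ₗ TensorProduct.map (asr k D H H) (asr k H D H))
        ∘ₗ TensorProduct.map (TensorProduct.map LinearMap.id (δH k H) ∘ₗ cR)
            (TensorProduct.map LinearMap.id cR ∘ₗ cL)
        ∘ₗ Δd := by
    have s1 : TensorProduct.map (TensorProduct.map cR cL ∘ₗ Δd) LinearMap.id ∘ₗ cR
        = TensorProduct.map (TensorProduct.map cR cL) LinearMap.id
            ∘ₗ (TensorProduct.map Δd LinearMap.id ∘ₗ cR) := by
      rw [← LinearMap.comp_assoc, ← TensorProduct.map_comp, LinearMap.comp_id]
    rw [s1, mB,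
      show TensorProduct.map (TensorProduct.map cR cL) LinearMap.id
          ∘ₗ (TensorProduct.map LinearMap.id (μH k H) ∘ₗ tt k D H D H
              ∘ₗ TensorProduct.map cR cR ∘ₗ Δd)
        = (TensorProduct.map (TensorProduct.map cR cL) LinearMap.id
            ∘ₗ TensorProduct.map LinearMap.id (μH k H) ∘ₗ tt k D H D H)
            ∘ₗ TensorProduct.map cR cR ∘ₗ Δd from rfl,
      NAT1 cL cR]
    refine LinearMap.ext fun m => ?_
    simp only [LinearMap.comp_apply, map_fuse, LinearMap.comp_id, LinearMap.id_comp]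
    rw [mRho, mC]
  rw [pPart, mLam]
  -- fuse and use coassociativity of `Δd`
  have fuse1 : TensorProduct.map
        ((TensorProduct.map LinearMap.id (μH k H) ∘ₗ tt k (D ⊗[k] H) H (H ⊗[k] D) H
            ∘ₗ TensorProduct.map (asr k D H H) (asr k H D H))
          ∘ₗ TensorProduct.map (TensorProduct.map LinearMap.id (δH k H) ∘ₗ cR)
              (TensorProduct.map LinearMap.id cR ∘ₗ cL) ∘ₗ Δd)
        (asr k H H D ∘ₗ TensorProduct.map LinearMap.id cL ∘ₗ cL) ∘ₗ Δd
      = C1 ∘ₗ (TensorProduct.map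
            (TensorProduct.map (TensorProduct.map LinearMap.id (δH k H) ∘ₗ cR)
              (TensorProduct.map LinearMap.id cR ∘ₗ cL))
            (TensorProduct.map LinearMap.id cL ∘ₗ cL))
          ∘ₗ (TensorProduct.map Δd LinearMap.id) ∘ₗ Δd := by
    refine LinearMap.ext fun m => ?_
    simp only [LinearMap.comp_apply, C1, map_fuse, LinearMap.comp_id, LinearMap.id_comp]
  rw [fuse1, mDel,
    show C1 ∘ₗ (TensorProduct.map
            (TensorProduct.map (TensorProduct.map LinearMap.id (δH k H) ∘ₗ cR)
              (TensorProduct.map LinearMap.id cR ∘ₗ cL))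
            (TensorProduct.map LinearMap.id cL ∘ₗ cL))
          ∘ₗ (asr k D D D ∘ₗ TensorProduct.map LinearMap.id Δd ∘ₗ Δd)
      = C1 ∘ₗ ((TensorProduct.map
            (TensorProduct.map (TensorProduct.map LinearMap.id (δH k H) ∘ₗ cR)
              (TensorProduct.map LinearMap.id cR ∘ₗ cL))
            (TensorProduct.map LinearMap.id cL ∘ₗ cL))
          ∘ₗ asr k D D D) ∘ₗ TensorProduct.map LinearMap.id Δd ∘ₗ Δd from rfl,
    NAT3]
  refine LinearMap.ext fun m => ?_
  simp only [LinearMap.comp_apply, map_fuse, LinearMap.comp_id, LinearMap.id_comp]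

end Aux6
section Aux7
variable {k : Type*} [CommRing k] {H : Type*} [Ring H] [Bialgebra k H]
variable {D : Type*} [AddCommGroup D] [Module k D]
variable (cL : D →ₗ[k] H ⊗[k] D) (cR : D →ₗ[k] D ⊗[k] H)
variable (Δd : D →ₗ[k] D ⊗[k] D)

lemma coassoc_map
    (hL2 : ∀ m : D, TensorProduct.map LinearMap.id cL (cL m)
        = TensorProduct.assoc k H H D (TensorProduct.map (δH k H) LinearMap.id (cL m)))
    (hR2 : ∀ m : D, TensorProduct.map cR LinearMap.id (cR m)
        = (TensorProduct.assoc k D H H).symm (TensorProduct.map LinearMap.id (δH k H) (cR m)))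
    (hLR : ∀ m : D, TensorProduct.map LinearMap.id cR (cL m)
        = TensorProduct.assoc k H D H (TensorProduct.map cL LinearMap.id (cR m)))
    (hc3 : ∀ m : D, TensorProduct.assoc k D D D
          (TensorProduct.map Δd LinearMap.id (Δd m))
        = TensorProduct.map LinearMap.id Δd (Δd m))
    (hl1 : ∀ m : D, TensorProduct.map (μH k H) LinearMap.id
        (tt k H D H D (TensorProduct.map cL cL (Δd m)))
      = TensorProduct.map LinearMap.id Δd (cL m))
    (hr1 : ∀ m : D, TensorProduct.map LinearMap.id (μH k H)
        (tt k D H D H (TensorProduct.map cR cR (Δd m)))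
      = TensorProduct.map Δd LinearMap.id (cR m))
    (Δs : D ⊗[k] H →ₗ[k] (D ⊗[k] H) ⊗[k] (D ⊗[k] H))
    (hΔ : ∀ (d : D) (h : H), Δs (d ⊗ₜ h) = Wmap k H cL cR (Δd d ⊗ₜ δH k H h)) :
    (TensorProduct.assoc k (D ⊗[k] H) (D ⊗[k] H) (D ⊗[k] H)).toLinearMap
        ∘ₗ TensorProduct.map Δs LinearMap.id ∘ₗ Wmap k H cL cR
        ∘ₗ TensorProduct.map Δd (δH k H)
      = TensorProduct.map LinearMap.id Δs ∘ₗ Wmap k H cL cR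
          ∘ₗ TensorProduct.map Δd (δH k H) := by
  have mdel : TensorProduct.map (δH k H) LinearMap.id ∘ₗ δH k H
      = asr k H H H ∘ₗ TensorProduct.map LinearMap.id (δH k H) ∘ₗ δH k H := by
    refine LinearMap.ext fun m => ?_
    have h1 := LinearMap.congr_fun (Coalgebra.coassoc (R := k) (A := H)) m
    simp only [LinearMap.comp_apply, LinearMap.rTensor, LinearMap.lTensor] at h1
    simp only [LinearMap.comp_apply, asr, δH, LinearEquiv.coe_coe]
    rw [← h1]
    simp [δH]
  rw [Wmap_eq]
  calc (TensorProduct.assoc k (D ⊗[k] H) (D ⊗[k] H) (D ⊗[k] H)).toLinearMap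
        ∘ₗ TensorProduct.map Δs LinearMap.id
        ∘ₗ (Wc ∘ₗ TensorProduct.map (TensorProduct.map cR cL) LinearMap.id)
        ∘ₗ TensorProduct.map Δd (δH k H)
      = ((TensorProduct.assoc k (D ⊗[k] H) (D ⊗[k] H) (D ⊗[k] H)).toLinearMap
          ∘ₗ TensorProduct.map Δs LinearMap.id ∘ₗ Wc)
          ∘ₗ TensorProduct.map (TensorProduct.map cR cL) LinearMap.id
          ∘ₗ TensorProduct.map Δd (δH k H) := rfl
    _ = (Phi1 ∘ₗ TensorProduct.map
          (TensorProduct.map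
            (TensorProduct.map (TensorProduct.map cR cL ∘ₗ Δd) LinearMap.id)
            (TensorProduct.map (δH k H) LinearMap.id))
          (TensorProduct.map (δH k H) LinearMap.id))
          ∘ₗ TensorProduct.map (TensorProduct.map cR cL) LinearMap.id
          ∘ₗ TensorProduct.map Δd (δH k H) := by rw [E1 cL cR Δd Δs hΔ]
    _ = Phi1 ∘ₗ TensorProduct.map
          (TensorProduct.map
            (TensorProduct.map (TensorProduct.map cR cL ∘ₗ Δd) LinearMap.id ∘ₗ cR)
            (TensorProduct.map (δH k H) LinearMap.id ∘ₗ cL) ∘ₗ Δd)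
          (TensorProduct.map (δH k H) LinearMap.id ∘ₗ δH k H) := by
        refine TensorProduct.ext' fun d h => ?_
        simp only [LinearMap.comp_apply, TensorProduct.map_tmul, LinearMap.id_apply, map_fuse]
    _ = Phi1 ∘ₗ TensorProduct.map
          ((C1 ∘ₗ asr k (D ⊗[k] (H ⊗[k] H)) (H ⊗[k] (D ⊗[k] H)) (H ⊗[k] (H ⊗[k] D)))
            ∘ₗ TensorProduct.map (TensorProduct.map LinearMap.id (δH k H) ∘ₗ cR)
                (TensorProduct.map (TensorProduct.map LinearMap.id cR ∘ₗ cL)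
                    (TensorProduct.map LinearMap.id cL ∘ₗ cL) ∘ₗ Δd)
            ∘ₗ Δd)
          (asr k H H H ∘ₗ TensorProduct.map LinearMap.id (δH k H) ∘ₗ δH k H) := by
        rw [slotD cL cR Δd hL2 hR2 hLR hc3 hr1, mdel]
    _ = (Phi1 ∘ₗ TensorProduct.map
          (C1 ∘ₗ asr k (D ⊗[k] (H ⊗[k] H)) (H ⊗[k] (D ⊗[k] H)) (H ⊗[k] (H ⊗[k] D)))
          (asr k H H H))
          ∘ₗ TensorProduct.map
            (TensorProduct.map (TensorProduct.map LinearMap.id (δH k H) ∘ₗ cR)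
                (TensorProduct.map (TensorProduct.map LinearMap.id cR ∘ₗ cL)
                    (TensorProduct.map LinearMap.id cL ∘ₗ cL) ∘ₗ Δd) ∘ₗ Δd)
            (TensorProduct.map LinearMap.id (δH k H) ∘ₗ δH k H) := by
        refine TensorProduct.ext' fun d h => ?_
        simp only [LinearMap.comp_apply, TensorProduct.map_tmul, LinearMap.id_apply, map_fuse]
    _ = (Phi2 ∘ₗ TensorProduct.map (TensorProduct.map LinearMap.id C2) LinearMap.id)
          ∘ₗ TensorProduct.map
            (TensorProduct.map (TensorProduct.map LinearMap.id (δH k H) ∘ₗ cR)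
                (TensorProduct.map (TensorProduct.map LinearMap.id cR ∘ₗ cL)
                    (TensorProduct.map LinearMap.id cL ∘ₗ cL) ∘ₗ Δd) ∘ₗ Δd)
            (TensorProduct.map LinearMap.id (δH k H) ∘ₗ δH k H) := by rw [STRUCT]
    _ = Phi2 ∘ₗ TensorProduct.map
          (TensorProduct.map (TensorProduct.map LinearMap.id (δH k H) ∘ₗ cR)
              (C2 ∘ₗ TensorProduct.map (TensorProduct.map LinearMap.id cR ∘ₗ cL)
                  (TensorProduct.map LinearMap.id cL ∘ₗ cL) ∘ₗ Δd) ∘ₗ Δd)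
          (TensorProduct.map LinearMap.id (δH k H) ∘ₗ δH k H) := by
        refine TensorProduct.ext' fun d h => ?_
        simp only [LinearMap.comp_apply, TensorProduct.map_tmul, LinearMap.id_apply, map_fuse,
          LinearMap.comp_id, LinearMap.id_comp]
    _ = Phi2 ∘ₗ TensorProduct.map
          (TensorProduct.map (TensorProduct.map LinearMap.id (δH k H) ∘ₗ cR)
              (TensorProduct.map LinearMap.id (TensorProduct.map cR cL ∘ₗ Δd) ∘ₗ cL) ∘ₗ Δd)
          (TensorProduct.map LinearMap.id (δH k H) ∘ₗ δH k H) := by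
        rw [slotQ cL cR Δd hl1]
    _ = (Phi2 ∘ₗ TensorProduct.map
          (TensorProduct.map
            (TensorProduct.map LinearMap.id (δH k H))
            (TensorProduct.map LinearMap.id (TensorProduct.map cR cL ∘ₗ Δd)))
          (TensorProduct.map LinearMap.id (δH k H)))
          ∘ₗ TensorProduct.map (TensorProduct.map cR cL) LinearMap.id
          ∘ₗ TensorProduct.map Δd (δH k H) := by
        refine TensorProduct.ext' fun d h => ?_
        simp only [LinearMap.comp_apply, TensorProduct.map_tmul, LinearMap.id_apply, map_fuse]
    _ = (TensorProduct.map LinearMap.id Δs ∘ₗ Wc)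
          ∘ₗ TensorProduct.map (TensorProduct.map cR cL) LinearMap.id
          ∘ₗ TensorProduct.map Δd (δH k H) := by rw [E2 cL cR Δd Δs hΔ]
    _ = TensorProduct.map LinearMap.id Δs
          ∘ₗ (Wc ∘ₗ TensorProduct.map (TensorProduct.map cR cL) LinearMap.id)
          ∘ₗ TensorProduct.map Δd (δH k H) := rfl

end Aux7
/-- the L-R-smash coproduct `D ♮ H` is a coassociative counital coalgebra. -/
theorem lr_smash_coproduct_is_coalgebra
    {k : Type*} [CommRing k] {H : Type*} [Ring H] [Bialgebra k H]
    {D : Type*} [AddCommGroup D] [Module k D]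
    (cL : D →ₗ[k] H ⊗[k] D) (cR : D →ₗ[k] D ⊗[k] H)
    (Δd : D →ₗ[k] D ⊗[k] D) (εd : D →ₗ[k] k)
    (hbic : IsBicomodule k H cL cR) (hco : IsCoalg k Δd εd)
    (hlcc : IsLComodCoalg k H cL Δd εd) (hrcc : IsRComodCoalg k H cR Δd εd)
    (Δs : D ⊗[k] H →ₗ[k] (D ⊗[k] H) ⊗[k] (D ⊗[k] H))
    (hΔ : ∀ (d : D) (h : H), Δs (d ⊗ₜ h) = Wmap k H cL cR (Δd d ⊗ₜ δH k H h)) :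
    (∀ x : D ⊗[k] H,
      TensorProduct.assoc k (D ⊗[k] H) (D ⊗[k] H) (D ⊗[k] H)
          (TensorProduct.map Δs LinearMap.id (Δs x))
        = TensorProduct.map LinearMap.id Δs (Δs x)) ∧
    (∀ x : D ⊗[k] H,
      TensorProduct.lid k (D ⊗[k] H)
          (TensorProduct.map (smashCounit k H εd) LinearMap.id (Δs x)) = x) ∧
    (∀ x : D ⊗[k] H,
      TensorProduct.rid k (D ⊗[k] H)
          (TensorProduct.map LinearMap.id (smashCounit k H εd) (Δs x)) = x) := by
  have hΔ' : Δs = Wmap k H cL cR ∘ₗ TensorProduct.map Δd (δH k H) :=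
    TensorProduct.ext' fun d h => by simp [hΔ]
  obtain ⟨⟨hL1, hL2⟩, ⟨hR1, hR2⟩, hLR⟩ := hbic
  obtain ⟨hc1, hc2, hc3⟩ := hco
  obtain ⟨hl1, hl2⟩ := hlcc
  obtain ⟨hr1, hr2⟩ := hrcc
  refine ⟨fun x => ?_, fun x => ?_, fun x => ?_⟩
  · have h0 := LinearMap.congr_fun
      (coassoc_map cL cR Δd hL2 hR2 hLR hc3 hl1 hr1 Δs hΔ) x
    simpa [hΔ', LinearMap.comp_apply] using h0
  · have h0 := LinearMap.congr_fun (counit_left_map cL cR Δd εd hL1 hr2 hc1) x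
    simpa [ctr1, hΔ', LinearMap.comp_apply] using h0
  · have h0 := LinearMap.congr_fun (counit_right_map cL cR Δd εd hR1 hl2 hc2) x
    simpa [ctr2, hΔ', LinearMap.comp_apply] using h0


end LRPaper
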